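/- In the group G'(D̃₄^{(1,1)}), every generator tᵢ can be expressed in terms of t₀, t₁ and their inverses: for every k ∈ ℤ one has t_{2k} = (t₁t₀)^k · t₀ · (t₁t₀)^{-k} and t_{2k+1} = (t₁t₀)^k · t₁ · (t₁t₀)^{-k}. -/

import Mathlib

/-!
STATEMENT 3: In `G'(D̃₄^{(1,1)})`, for every `k ∈ ℤ` one has
`t_{2k} = (t₁t₀)^k · t₀ · (t₁t₀)^{-k}` and `t_{2k+1} = (t₁t₀)^k · t₁ · (t₁t₀)^{-k}`.
-/

namespace EllipticD4

abbrev GenG' : Type := ℤ ⊕ Fin 4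

def tG' (i : ℤ) : FreeGroup GenG' := FreeGroup.of (Sum.inl i)
def sG' (j : Fin 4) : FreeGroup GenG' := FreeGroup.of (Sum.inr j)

/-- Relators of the new presentation of `G'(D̃₄^{(1,1)})`. -/
def relsG' : Set (FreeGroup GenG') :=
  { r | (∃ i j, r = (tG' i * sG' j * tG' i)⁻¹ * (sG' j * tG' i * sG' j)) ∨
        (∃ i j, i ≠ j ∧ r = (sG' i * sG' j)⁻¹ * (sG' j * sG' i)) ∨
        (∃ i j : ℤ, r = (tG' i * tG' (i - 1))⁻¹ * (tG' j * tG' (j - 1))) }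

/-- The image of the generator `tᵢ` in `G'(D̃₄^{(1,1)})`. -/
def t (i : ℤ) : PresentedGroup relsG' := PresentedGroup.of (Sum.inl i)

-- Generic step lemmas in an arbitrary group.
section Generic
variable {G : Type*} [Group G] (c x y : G) (m : ℤ)

lemma conj_up_shift (h : y = x⁻¹ * c) :
    c * (c ^ m * x * c ^ (-m))⁻¹ = c ^ (m + 1) * y * c ^ (-(m + 1)) := by
  subst h; group

lemma conj_up_same (h : y = c * x⁻¹) :
    c * (c ^ m * x * c ^ (-m))⁻¹ = c ^ m * y * c ^ (-m) := by
  subst h; group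

lemma conj_down_shift (h : y = c * x⁻¹) :
    (c ^ m * x * c ^ (-m))⁻¹ * c = c ^ (m - 1) * y * c ^ (-(m - 1)) := by
  subst h; group

lemma conj_down_same (h : y = x⁻¹ * c) :
    (c ^ m * x * c ^ (-m))⁻¹ * c = c ^ m * y * c ^ (-m) := by
  subst h; group

end Generic

lemma rel_t (i : ℤ) : t i * t (i - 1) = t 1 * t 0 := by
  have hmem : ((tG' i * tG' (i - 1))⁻¹ * (tG' 1 * tG' (1 - 1)) : FreeGroup GenG') ∈ relsG' := by
    right; right; exact ⟨i, 1, rfl⟩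
  have h1 : PresentedGroup.mk relsG' ((tG' i * tG' (i - 1))⁻¹ * (tG' 1 * tG' (1 - 1))) = 1 := by
    change (QuotientGroup.mk _ : PresentedGroup relsG') = 1
    rw [QuotientGroup.eq_one_iff]
    exact Subgroup.subset_normalClosure hmem
  rw [map_mul, map_inv, map_mul, map_mul] at h1
  have h3 : (t i * t (i - 1))⁻¹ * (t 1 * t (1 - 1)) = 1 := h1
  have e : (1 : ℤ) - 1 = 0 := by norm_num
  rw [e] at h3
  exact (inv_mul_eq_one.mp h3)

lemma step_up (i : ℤ) : t (i + 1) = (t 1 * t 0) * (t i)⁻¹ := by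
  have h := rel_t (i + 1)
  have e : i + 1 - 1 = i := by ring
  rw [e] at h
  rw [← h]; group

lemma step_down (i : ℤ) : t i = (t (i + 1))⁻¹ * (t 1 * t 0) := by
  rw [step_up i]; group

theorem t_in_terms_of_t0_t1 (k : ℤ) :
    t (2 * k) = (t 1 * t 0) ^ k * t 0 * (t 1 * t 0) ^ (-k) ∧
    t (2 * k + 1) = (t 1 * t 0) ^ k * t 1 * (t 1 * t 0) ^ (-k) := by
  induction k using Int.induction_on with
  | zero => norm_num
  | succ k ih =>
    obtain ⟨h0, h1⟩ := ih
    have e1 : (2 * ((k : ℤ) + 1)) = (2 * k + 1) + 1 := by ring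
    have hA : t (2 * ((k : ℤ) + 1)) =
        (t 1 * t 0) ^ ((k : ℤ) + 1) * t 0 * (t 1 * t 0) ^ (-((k : ℤ) + 1)) := by
      rw [e1, step_up, h1]
      exact conj_up_shift _ _ _ _ (by group)
    refine ⟨hA, ?_⟩
    rw [step_up, hA]
    exact conj_up_same _ _ _ _ (by group)
  | pred k ih =>
    obtain ⟨h0, h1⟩ := ih
    have e1 : (2 * (-(k : ℤ) - 1) + 1) + 1 = 2 * (-(k : ℤ)) := by ring
    have hB : t (2 * (-(k : ℤ) - 1) + 1) =
        (t 1 * t 0) ^ (-(k : ℤ) - 1) * t 1 * (t 1 * t 0) ^ (-(-(k : ℤ) - 1)) := by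
      rw [step_down, e1, h0]
      exact conj_down_shift _ _ _ _ (by group)
    refine ⟨?_, hB⟩
    have e2 : (2 * (-(k : ℤ) - 1)) + 1 = 2 * (-(k : ℤ) - 1) + 1 := rfl
    rw [step_down (2 * (-(k : ℤ) - 1)), hB]
    exact conj_down_same _ _ _ _ (by group)

end EllipticD4
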